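/- For every integer n ≥ 1, the n-th power of the ideal 𝔞 = span{Q, τ} of the ring O satisfies 𝔞^n = span{Q^n, τ − Q·Sₙ} (where Q^n, Q, Sₙ denote the images in O of the corresponding integers). -/

import Mathlib

open Polynomial

theorem stmt_6 (Δ : ℤ) (hΔ : Δ < 0) (P Q c u₁ v₁ : ℤ)
    (hdisc : P ^ 2 - Δ = 4 * Q * c) (hbez : u₁ * Q + v₁ * P = 1)
    (S : ℕ → ℤ) (hS1 : S 1 = 0)
    (hSrec : ∀ n : ℕ, 1 ≤ n → S (n + 1) = c * v₁ + Q * u₁ * S n + Q * v₁ * (S n) ^ 2) :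
    ∀ n : ℕ, 1 ≤ n →
      (Ideal.span {(Q : AdjoinRoot (X ^ 2 - C P * X + C (Q * c) : ℤ[X])),
          AdjoinRoot.root (X ^ 2 - C P * X + C (Q * c) : ℤ[X])}) ^ n
        = Ideal.span {((Q ^ n : ℤ) : AdjoinRoot (X ^ 2 - C P * X + C (Q * c) : ℤ[X])),
            AdjoinRoot.root (X ^ 2 - C P * X + C (Q * c) : ℤ[X]) -
              ((Q * S n : ℤ) : AdjoinRoot (X ^ 2 - C P * X + C (Q * c) : ℤ[X]))} := by
  set O := AdjoinRoot (X ^ 2 - C P * X + C (Q * c) : ℤ[X]) with hOdef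
  set τ : O := AdjoinRoot.root (X ^ 2 - C P * X + C (Q * c) : ℤ[X]) with hτdef
  -- the defining relation of τ
  have hτ : τ ^ 2 = (P : O) * τ - (Q : O) * (c : O) := by
    have h := AdjoinRoot.eval₂_root (X ^ 2 - C P * X + C (Q * c) : ℤ[X])
    simp only [eval₂_add, eval₂_sub, eval₂_mul, eval₂_pow, eval₂_X, eval₂_C] at h
    have h' : τ ^ 2 - (P : O) * τ + ((Q * c : ℤ) : O) = 0 := h
    push_cast +zetaDelta at h'
    linear_combination h'
  clear_value τ
  -- Newton-type step for S
  have hstep : ∀ n : ℕ, 1 ≤ n →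
      S (n + 1) = S n + v₁ * (Q * S n ^ 2 - P * S n + c) := by
    intro n hn
    linear_combination hSrec n hn + S n * hbez
  -- divisibility
  have hdvd : ∀ m : ℕ, Q ^ m ∣ Q * S (m + 1) ^ 2 - P * S (m + 1) + c := by
    intro m
    induction m with
    | zero => simp
    | succ m ih =>
      obtain ⟨k, hk⟩ := ih
      refine ⟨k * (u₁ + 2 * v₁ * S (m + 1) +
        v₁ ^ 2 * (Q * S (m + 1) ^ 2 - P * S (m + 1) + c)), ?_⟩
      rw [hstep (m + 1) (by omega)]
      linear_combination (Q * (u₁ + 2 * v₁ * S (m + 1) +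
          v₁ ^ 2 * (Q * S (m + 1) ^ 2 - P * S (m + 1) + c))) * hk -
        (Q * S (m + 1) ^ 2 - P * S (m + 1) + c) * hbez
  intro n hn
  induction n, hn using Nat.le_induction with
  | base => norm_num [hS1]
  | succ n hn ih =>
    obtain ⟨m, rfl⟩ : ∃ m, n = m + 1 := ⟨n - 1, by omega⟩
    obtain ⟨k, hk⟩ := hdvd m
    have hst := hstep (m + 1) (by omega)
    have hrec := hSrec (m + 1) (by omega)
    -- cast hypotheses into O
    have hkO : ((Q : O) * (S (m + 1) : O) ^ 2 - (P : O) * (S (m + 1) : O) + (c : O))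
        = (Q : O) ^ m * (k : O) := by
      have h := congrArg (fun z : ℤ => (z : O)) hk
      push_cast +zetaDelta at h
      exact h
    have hstO : ((S (m + 2) : ℤ) : O) = ((S (m + 1) : ℤ) : O) + (v₁ : O) *
        ((Q : O) * (S (m + 1) : O) ^ 2 - (P : O) * (S (m + 1) : O) + (c : O)) := by
      have h := congrArg (fun z : ℤ => (z : O)) hst
      push_cast +zetaDelta at h
      exact h
    have hrecO : ((S (m + 2) : ℤ) : O) = (c : O) * (v₁ : O) + (Q : O) * (u₁ : O) *
        (S (m + 1) : O) + (Q : O) * (v₁ : O) * (S (m + 1) : O) ^ 2 := by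
      have h := congrArg (fun z : ℤ => (z : O)) hrec
      push_cast +zetaDelta at h
      exact h
    have hbezO : (u₁ : O) * (Q : O) + (v₁ : O) * (P : O) = 1 := by
      have h := congrArg (fun z : ℤ => (z : O)) hbez
      push_cast +zetaDelta at h
      exact h
    rw [pow_succ (Ideal.span {(Q : O), τ}) (m + 1)]
    rw [ih]
    rw [Ideal.span_pair_mul_span_pair]
    apply le_antisymm
    · rw [Ideal.span_le]
      intro ξ hξ
      simp only [Set.mem_insert_iff, Set.mem_singleton_iff] at hξ
      rw [SetLike.mem_coe, Ideal.mem_span_pair]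
      rcases hξ with rfl | rfl | rfl | rfl
      · exact ⟨1, 0, by push_cast; ring⟩
      · exact ⟨((S (m + 2) : ℤ) : O), ((Q ^ (m + 1) : ℤ) : O), by push_cast; ring⟩
      · refine ⟨((v₁ * k : ℤ) : O), (Q : O), ?_⟩
        push_cast +zetaDelta
        linear_combination (-(Q : O) ^ 2) * hstO + (-(Q : O) ^ 2 * (v₁ : O)) * hkO
      · refine ⟨-(((u₁ + v₁ * S (m + 1)) * k : ℤ) : O), ((P - Q * S (m + 1) : ℤ) : O), ?_⟩
        push_cast +zetaDelta
        linear_combination (-1 : O) * hτ +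
          (-(Q : O) * ((P : O) - (Q : O) * (S (m + 1) : O))) * hstO +
          ((Q : O) ^ 2 * ((u₁ : O) + (v₁ : O) * (S (m + 1) : O))) * hkO +
          (-(Q : O) * ((Q : O) * (S (m + 1) : O) ^ 2 - (P : O) * (S (m + 1) : O) + (c : O)))
            * hbezO
    · rw [Ideal.span_le]
      intro ξ hξ
      simp only [Set.mem_insert_iff, Set.mem_singleton_iff] at hξ
      rw [SetLike.mem_coe]
      have hy : (τ - ((Q * S (m + 1) : ℤ) : O)) * (Q : O) ∈
          Ideal.span {((Q ^ (m + 1) : ℤ) : O) * (Q : O), ((Q ^ (m + 1) : ℤ) : O) * τ,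
            (τ - ((Q * S (m + 1) : ℤ) : O)) * (Q : O), (τ - ((Q * S (m + 1) : ℤ) : O)) * τ} :=
        Ideal.subset_span (by simp)
      have hz : (τ - ((Q * S (m + 1) : ℤ) : O)) * τ ∈
          Ideal.span {((Q ^ (m + 1) : ℤ) : O) * (Q : O), ((Q ^ (m + 1) : ℤ) : O) * τ,
            (τ - ((Q * S (m + 1) : ℤ) : O)) * (Q : O), (τ - ((Q * S (m + 1) : ℤ) : O)) * τ} :=
        Ideal.subset_span (by simp)
      have hw : ((Q ^ (m + 1) : ℤ) : O) * (Q : O) ∈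
          Ideal.span {((Q ^ (m + 1) : ℤ) : O) * (Q : O), ((Q ^ (m + 1) : ℤ) : O) * τ,
            (τ - ((Q * S (m + 1) : ℤ) : O)) * (Q : O), (τ - ((Q * S (m + 1) : ℤ) : O)) * τ} :=
        Ideal.subset_span (by simp)
      rcases hξ with rfl | rfl
      · have e : ((Q ^ (m + 1 + 1) : ℤ) : O) = ((Q ^ (m + 1) : ℤ) : O) * (Q : O) := by
          push_cast; ring
        rw [e]; exact hw
      · have e : τ - ((Q * S (m + 1 + 1) : ℤ) : O) =
            (v₁ : O) * ((τ - ((Q * S (m + 1) : ℤ) : O)) * τ) +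
            ((u₁ + v₁ * S (m + 1) : ℤ) : O) * ((τ - ((Q * S (m + 1) : ℤ) : O)) * (Q : O)) := by
          push_cast +zetaDelta
          linear_combination (-(v₁ : O)) * hτ + (-τ) * hbezO + (-(Q : O)) * hrecO
        rw [e]
        exact Ideal.add_mem _ (Ideal.mul_mem_left _ _ hz) (Ideal.mul_mem_left _ _ hy)
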